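/- arXiv:2010.05540 — 2 statements merged into one kernel-verified Lean document; each statement's English description precedes it below -/
import Mathlib

section
/- Let γ > 1 be real and let φ : ℝ → ℝ be a positive, even, L²-normalized eigenfunction of the operator −d²/dz² + |z|^{2γ} with eigenvalue μ₀ > 0, i.e. −φ''(z) + |z|^{2γ}φ(z) = μ₀ φ(z) on ℝ, with φ(z) → 0 as z → +∞. Then there exists a constant c > 0 such that φ(z) ~ c · z^{-γ/2} · exp(−z^{γ+1}/(γ+1)) as z → +∞, i.e. the ratio φ(z) / (z^{-γ/2} e^{−z^{γ+1}/(γ+1)}) converges to c. -/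
set_option maxHeartbeats 1000000

open Filter MeasureTheory Set

private lemma stay_pos {f f' : ℝ → ℝ} {a : ℝ}
    (hd : ∀ z, a ≤ z → HasDerivAt f (f' z) z)
    (h0 : 0 < f a)
    (hc : ∀ z, a ≤ z → f z = 0 → 0 < f' z) :
    ∀ z, a ≤ z → 0 < f z := by
  intro b hb
  by_contra hcon
  push_neg at hcon
  set S : Set ℝ := Set.Icc a b ∩ f ⁻¹' (Set.Iic 0) with hS
  have hbS : b ∈ S := ⟨⟨hb, le_refl b⟩, hcon⟩
  have hne : S.Nonempty := ⟨b, hbS⟩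
  have hbdd : BddBelow S := ⟨a, fun x hx => hx.1.1⟩
  have hcont : ContinuousOn f (Set.Icc a b) := fun x hx =>
    ((hd x hx.1).continuousAt).continuousWithinAt
  have hclosed : IsClosed S :=
    hcont.preimage_isClosed_of_isClosed isClosed_Icc isClosed_Iic
  obtain ⟨t, ht_def⟩ : ∃ t, t = sInf S := ⟨_, rfl⟩
  have htS : t ∈ S := ht_def ▸ hclosed.csInf_mem hne hbdd
  have hat : a ≤ t := htS.1.1
  have hta : a ≠ t := by
    intro h
    rw [← h] at htS
    exact absurd htS.2 (not_le.mpr h0)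
  have hat' : a < t := lt_of_le_of_ne hat hta
  have hpos_lt : ∀ y, a ≤ y → y < t → 0 < f y := by
    intro y hay hyt
    by_contra hy
    push_neg at hy
    have hyS : y ∈ S := ⟨⟨hay, hyt.le.trans htS.1.2⟩, hy⟩
    rw [ht_def] at hyt
    exact absurd (csInf_le hbdd hyS) (not_le.mpr hyt)
  have hft0 : f t = 0 := by
    refine le_antisymm htS.2 ?_
    have hcont_t : Tendsto f (nhdsWithin t (Set.Iio t)) (nhds (f t)) :=
      ((hd t hat).continuousAt.continuousWithinAt).tendsto
    refine ge_of_tendsto hcont_t ?_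
    filter_upwards [Ioo_mem_nhdsLT_of_mem (Set.mem_Ioc.mpr ⟨hat', le_refl t⟩)] with y hy
    exact (hpos_lt y hy.1.le hy.2).le
  have hderiv := hc t hat hft0
  have hslope : Tendsto (slope f t) (nhdsWithin t (Set.Iio t)) (nhds (f' t)) :=
    (hasDerivAt_iff_tendsto_slope.mp (hd t hat)).mono_left
      (nhdsWithin_mono _ (fun y hy => ne_of_lt hy))
  have : f' t ≤ 0 := by
    refine le_of_tendsto hslope ?_
    filter_upwards [Ioo_mem_nhdsLT_of_mem (Set.mem_Ioc.mpr ⟨hat', le_refl t⟩)] with y hy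
    have h1 : 0 < f y := hpos_lt y hy.1.le hy.2
    have h2 : y - t ≤ 0 := by linarith [hy.2]
    rw [slope_def_field, hft0, sub_zero]
    exact div_nonpos_of_nonneg_of_nonpos h1.le h2
  linarith

private lemma mono_Ici {f f' : ℝ → ℝ} {a : ℝ}
    (hd : ∀ z, a ≤ z → HasDerivAt f (f' z) z)
    (h0 : ∀ z, a ≤ z → 0 ≤ f' z) :
    MonotoneOn f (Set.Ici a) := by
  apply monotoneOn_of_deriv_nonneg (convex_Ici a)
  · exact fun x hx => (hd x hx).continuousAt.continuousWithinAt
  · intro x hx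
    rw [interior_Ici] at hx
    exact (hd x hx.le).differentiableAt.differentiableWithinAt
  · intro x hx
    rw [interior_Ici] at hx
    rw [(hd x hx.le).deriv]
    exact h0 x hx.le

private lemma anti_Ici {f f' : ℝ → ℝ} {a : ℝ}
    (hd : ∀ z, a ≤ z → HasDerivAt f (f' z) z)
    (h0 : ∀ z, a ≤ z → f' z ≤ 0) :
    AntitoneOn f (Set.Ici a) := by
  apply antitoneOn_of_deriv_nonpos (convex_Ici a)
  · exact fun x hx => (hd x hx).continuousAt.continuousWithinAt
  · intro x hx
    rw [interior_Ici] at hx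
    exact (hd x hx.le).differentiableAt.differentiableWithinAt
  · intro x hx
    rw [interior_Ici] at hx
    rw [(hd x hx.le).deriv]
    exact h0 x hx.le

private lemma strictAnti_Ici {f f' : ℝ → ℝ} {a : ℝ}
    (hd : ∀ z, a ≤ z → HasDerivAt f (f' z) z)
    (h0 : ∀ z, a ≤ z → f' z < 0) :
    StrictAntiOn f (Set.Ici a) := by
  apply strictAntiOn_of_deriv_neg (convex_Ici a)
  · exact fun x hx => (hd x hx).continuousAt.continuousWithinAt
  · intro x hx
    rw [interior_Ici] at hx
    rw [(hd x hx.le).deriv]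
    exact h0 x hx.le

theorem anharmonic_ground_state_asymptotics (γ : ℝ) (hγ : 1 < γ)
    (μ₀ : ℝ) (hμ₀ : 0 < μ₀) (φ : ℝ → ℝ)
    (hsmooth : ContDiff ℝ 2 φ)
    (hpos : ∀ z, 0 < φ z)
    (heven : ∀ z, φ (-z) = φ z)
    (hnorm : ∫ z : ℝ, (φ z) ^ 2 = 1)
    (heig : ∀ z : ℝ, -(deriv (deriv φ) z) + |z| ^ (2 * γ) * φ z = μ₀ * φ z)
    (hdecay : Tendsto φ atTop (nhds 0)) :
    ∃ c : ℝ, 0 < c ∧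
      Tendsto (fun z : ℝ =>
          φ z / (z ^ (-(γ / 2)) * Real.exp (-(z ^ (γ + 1) / (γ + 1)))))
        atTop (nhds c) := by
  have hγ0 : (0:ℝ) < γ := by linarith
  -- basic differentiability
  have hφdiff : Differentiable ℝ φ := hsmooth.differentiable (by norm_num)
  have hφd : ∀ z, HasDerivAt φ (deriv φ z) z := fun z => (hφdiff z).hasDerivAt
  have hφ'diff : Differentiable ℝ (deriv φ) := by
    have h2 : ContDiff ℝ ((1:ℕ) + 1) φ := by exact_mod_cast hsmooth
    exact (contDiff_succ_iff_deriv.mp h2).2.2.differentiable (by norm_num)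
  have hφ'd : ∀ z, HasDerivAt (deriv φ) (deriv (deriv φ) z) z := fun z => (hφ'diff z).hasDerivAt
  have hφ'' : ∀ z, 0 < z → deriv (deriv φ) z = (z ^ (2*γ) - μ₀) * φ z := by
    intro z hz
    have h := heig z
    rw [abs_of_pos hz] at h
    nlinarith [h]
  -- the model quantities
  set A : ℝ → ℝ := fun z => z ^ γ + γ/2 * z⁻¹ with hA_def
  set A' : ℝ → ℝ := fun z => γ * z ^ (γ-1) - γ/2 * (z^2)⁻¹ with hA'_def
  set q : ℝ → ℝ := fun z => (γ^2 + 2*γ)/(4*z^2) with hq_def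
  set s : ℝ → ℝ := fun z => deriv φ z / φ z + A z with hs_def
  set s' : ℝ → ℝ := fun z => 2 * A z * s z - (s z)^2 - μ₀ - q z with hs'_def
  clear_value A A' q s s'
  have hApos : ∀ z, 0 < z → 0 < A z := by
    intro z hz
    have := Real.rpow_pos_of_pos hz γ
    have : 0 < γ/2 * z⁻¹ := by positivity
    simp only [hA_def]
    positivity
  have hqpos : ∀ z, 0 < z → 0 < q z := by
    intro z hz
    simp only [hq_def]
    have : 0 < γ^2 + 2*γ := by nlinarith
    positivity
  have hAd : ∀ z, 0 < z → HasDerivAt A (A' z) z := by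
    intro z hz
    have h1 : HasDerivAt (fun x : ℝ => x ^ γ) (γ * z^(γ-1)) z :=
      Real.hasDerivAt_rpow_const (Or.inl hz.ne')
    have h2 : HasDerivAt (fun x : ℝ => γ/2 * x⁻¹) (γ/2 * (-(z^2)⁻¹)) z :=
      (hasDerivAt_inv hz.ne').const_mul (γ/2)
    have h3 := h1.add h2
    have : A = fun x : ℝ => x ^ γ + γ/2 * x⁻¹ := hA_def
    rw [this]
    refine h3.congr_deriv ?_
    simp only [hA'_def]; ring
  have hkey : ∀ z, 0 < z → (A z)^2 - q z - A' z = z ^ (2*γ) := by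
    intro z hz
    have e1 : z ^ (2*γ) = z^γ * z^γ := by rw [two_mul, Real.rpow_add hz]
    have e2 : z ^ (γ-1) = z^γ * z⁻¹ := by
      rw [Real.rpow_sub hz, Real.rpow_one, div_eq_mul_inv]
    simp only [hA_def, hq_def, hA'_def]
    rw [e1, e2]
    have hzne : z ≠ 0 := ne_of_gt hz
    field_simp
    ring
  have hsd : ∀ z, 0 < z → HasDerivAt s (s' z) z := by
    intro z hz
    have hφne : φ z ≠ 0 := (hpos z).ne'
    have hdiv := (hφ'd z).div (hφd z) hφne
    have h3 := hdiv.add (hAd z hz)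
    rw [hs_def]
    refine h3.congr_deriv ?_
    rw [hφ'' z hz]
    have hP : ((z ^ (2*γ) - μ₀) * φ z * φ z - deriv φ z * deriv φ z) / φ z ^ 2
        = (z ^ (2*γ) - μ₀) - (deriv φ z / φ z)^2 := by
      field_simp
    rw [hP, ← hkey z hz]
    simp only [hs'_def, hs_def]
    ring
  -- the threshold
  set Z : ℝ := μ₀ + (γ^2 + 2*γ)/4 + 2 with hZ_def
  set C : ℝ := μ₀ + (γ^2 + 2*γ)/4 + 1 with hC_def
  clear_value Z C
  have hCpos : 0 < C := by simp only [hC_def]; nlinarith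
  have hZ1 : (1:ℝ) ≤ Z := by simp only [hZ_def]; nlinarith
  have hZpos : (0:ℝ) < Z := by linarith
  have hz1 : ∀ z, Z ≤ z → (1:ℝ) ≤ z := fun z hz => hZ1.trans hz
  have hz0 : ∀ z, Z ≤ z → (0:ℝ) < z := fun z hz => lt_of_lt_of_le hZpos hz
  have hzγ : ∀ z, (1:ℝ) ≤ z → z ≤ z ^ γ := by
    intro z hz
    calc z = z ^ (1:ℝ) := (Real.rpow_one z).symm
    _ ≤ z ^ γ := Real.rpow_le_rpow_of_exponent_le hz hγ.le
  have hz2γ : ∀ z, (1:ℝ) ≤ z → z ≤ z ^ (2*γ) := by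
    intro z hz
    calc z = z ^ (1:ℝ) := (Real.rpow_one z).symm
    _ ≤ z ^ (2*γ) := Real.rpow_le_rpow_of_exponent_le hz (by nlinarith)
  have hqC : ∀ z, (1:ℝ) ≤ z → μ₀ + q z + 1 ≤ C := by
    intro z hz
    have h1 : q z ≤ (γ^2 + 2*γ)/4 := by
      simp only [hq_def]
      apply div_le_div_of_nonneg_left (by nlinarith) (by norm_num)
      nlinarith
    simp only [hC_def]; linarith
  have hqanti : ∀ x y, (0:ℝ) < x → x ≤ y → q y ≤ q x := by
    intro x y hx hxy
    simp only [hq_def]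
    apply div_le_div_of_nonneg_left (by nlinarith) (by nlinarith)
    nlinarith
  have hAmono : MonotoneOn A (Set.Ici (1:ℝ)) := by
    apply mono_Ici (f' := A') (fun z hz => hAd z (by linarith))
    intro z hz
    have h1 : (1:ℝ) ≤ z ^ (γ-1) := by
      calc (1:ℝ) = z ^ (0:ℝ) := (Real.rpow_zero z).symm
      _ ≤ z ^ (γ-1) := Real.rpow_le_rpow_of_exponent_le hz (by linarith)
    have h2 : (z^2)⁻¹ ≤ 1 := by
      rw [inv_le_one_iff₀]; right; nlinarith
    simp only [hA'_def]
    nlinarith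
  -- Claim 1 : s is eventually positive
  have claim1 : ∀ a, Z ≤ a → 0 < s a := by
    intro a ha
    by_contra hcon
    push_neg at hcon
    set E : ℝ → ℝ := fun z => z ^ (-γ) * Real.exp (-2*(z^(γ+1)/(γ+1))) with hE_def
    clear_value E
    have hEpos : ∀ z, 0 < z → 0 < E z := by
      intro z hz
      have := Real.rpow_pos_of_pos hz (-γ)
      simp only [hE_def]
      positivity
    have hγ1ne : γ + 1 ≠ 0 := by positivity
    have hEd : ∀ z, 0 < z → HasDerivAt E (-2 * A z * E z) z := by
      intro z hz
      have h1 : HasDerivAt (fun x : ℝ => x ^ (-γ)) (-γ * z^(-γ-1)) z :=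
        Real.hasDerivAt_rpow_const (Or.inl hz.ne')
      have h3 : HasDerivAt (fun x : ℝ => x ^ (γ+1)) ((γ+1) * z^γ) z := by
        have := Real.hasDerivAt_rpow_const (x := z) (p := γ+1) (Or.inl hz.ne')
        have hee : γ + 1 - 1 = γ := by ring
        rwa [hee] at this
      have h2i : HasDerivAt (fun x : ℝ => -2*(x^(γ+1)/(γ+1))) (-2*((γ+1) * z^γ/(γ+1))) z :=
        (h3.div_const (γ+1)).const_mul (-2)
      have h2 := h2i.exp
      have h4 := h1.mul h2
      rw [hE_def]
      refine h4.congr_deriv ?_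
      have e4 : z ^ (-γ-1) = z^(-γ) * z⁻¹ := by
        rw [show -γ-1 = -γ + (-1) by ring, Real.rpow_add hz, Real.rpow_neg_one]
      rw [e4]
      simp only [hA_def]
      have e3 : z ^ γ * z ^ (-γ) = 1 := by
        rw [← Real.rpow_add hz]; simp
      field_simp
      nlinarith [e3, Real.exp_pos (-2*(z^(γ+1)/(γ+1)))]
    have hganti : StrictAntiOn (fun z => s z * E z) (Set.Ici a) := by
      apply strictAnti_Ici (f' := fun z => s' z * E z + s z * (-2*A z*E z))
      · intro z hz
        have hz0' : 0 < z := lt_of_lt_of_le (hz0 a ha) hz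
        exact (hsd z hz0').mul (hEd z hz0')
      · intro z hz
        have hz0' : 0 < z := lt_of_lt_of_le (hz0 a ha) hz
        have he : s' z * E z + s z * (-2*A z*E z) = -((s z)^2 + μ₀ + q z) * E z := by
          simp only [hs'_def]; ring
        rw [he]
        apply mul_neg_of_neg_of_pos _ (hEpos z hz0')
        have := hqpos z hz0'
        nlinarith [sq_nonneg (s z)]
    have ha1 : a < a + 1 := by linarith
    have hsa1 : s (a+1) < 0 := by
      have h := hganti (self_mem_Ici) (mem_Ici.mpr (by linarith)) ha1
      have hEa := hEpos a (hz0 a ha)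
      have hE1 := hEpos (a+1) (by linarith [hz0 a ha])
      simp only at h
      nlinarith
    have hneg : ∀ z, a+1 ≤ z → s z < 0 := by
      intro z hz
      rcases eq_or_lt_of_le hz with h|h
      · rwa [← h]
      · have hgz := hganti (mem_Ici.mpr (by linarith)) (mem_Ici.mpr (by linarith)) (lt_trans ha1 h)
        have hga := hganti (self_mem_Ici) (mem_Ici.mpr (by linarith)) ha1
        have hEa := hEpos a (hz0 a ha)
        have hE1 := hEpos (a+1) (by linarith [hz0 a ha])
        have hEz := hEpos z (by linarith [hz0 a ha])
        simp only at hgz hga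
        nlinarith
    have hkmono : MonotoneOn (fun z => (s z)⁻¹ - z) (Set.Ici (a+1)) := by
      apply mono_Ici (f' := fun z => -s' z/(s z)^2 - 1)
      · intro z hz
        have hz0' : 0 < z := by linarith [hz0 a ha]
        exact ((hsd z hz0').inv (hneg z hz).ne).sub (hasDerivAt_id z)
      · intro z hz
        have hz0' : 0 < z := by linarith [hz0 a ha]
        have hsz := hneg z hz
        have hs2 : 0 < (s z)^2 := by nlinarith [mul_pos_of_neg_of_neg hsz hsz]
        have h1 : s' z ≤ -(s z)^2 := by
          simp only [hs'_def]
          have hA0 := hApos z hz0'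
          have hq0 := hqpos z hz0'
          nlinarith
        have : 1 ≤ -s' z / (s z)^2 := (le_div_iff₀ hs2).mpr (by nlinarith)
        linarith
    have hinvneg : (s (a+1))⁻¹ < 0 := inv_lt_zero.mpr hsa1
    set z₀ := a + 1 + (-(s (a+1))⁻¹) + 1 with hz₀_def
    clear_value z₀
    have hz₀ : a + 1 ≤ z₀ := by simp only [hz₀_def]; linarith
    have hk := hkmono (self_mem_Ici) (mem_Ici.mpr hz₀) hz₀
    have hsz₀ : s z₀ < 0 := hneg z₀ hz₀
    have : (s z₀)⁻¹ < 0 := inv_lt_zero.mpr hsz₀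
    simp only at hk
    simp only [hz₀_def] at hk this
    linarith
  have claim2 : ∀ b, Z ≤ b → s b ≤ (μ₀ + q b + 1)/A b := by
    intro b hb
    by_contra hcon
    push_neg at hcon
    set c₀ : ℝ := (μ₀ + q b + 1)/A b with hc₀_def
    clear_value c₀
    have hb0 : 0 < b := hz0 b hb
    have hb1 : 1 ≤ b := hz1 b hb
    have hAb : 0 < A b := hApos b hb0
    have hqb : 0 < q b := hqpos b hb0
    have hc₀pos : 0 < c₀ := by rw [hc₀_def]; apply div_pos _ hAb; linarith
    have hc₀Ab : c₀ * A b = μ₀ + q b + 1 := by rw [hc₀_def]; exact div_mul_cancel₀ _ hAb.ne'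
    have hAbγ : b ^ γ ≤ A b := by
      simp only [hA_def]
      have : 0 < γ/2 * b⁻¹ := by positivity
      linarith
    have hZC : Z = C + 1 := by simp only [hZ_def, hC_def]; ring
    have hAb_big : μ₀ + q b + 1 + 1 ≤ A b := by
      have h1 := hqC b hb1
      have h2 := hzγ b hb1
      linarith
    have hc₀1 : c₀ ≤ 1 := by rw [hc₀_def, div_le_one hAb]; linarith
    -- step 2a : s stays above c₀ forever
    have h2a : ∀ z, b ≤ z → c₀ < s z := by
      intro z hz
      have hsp := stay_pos (f := fun y => s y - c₀) (f' := s') (a := b)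
        (fun y hy => ((hsd y (by linarith : (0:ℝ) < y)).sub_const c₀))
        (by linarith)
        (fun y hy hzero => by
          have hsy : s y = c₀ := by linarith
          have hy0 : (0:ℝ) < y := by linarith
          have hAy : A b ≤ A y := hAmono (mem_Ici.mpr hb1) (mem_Ici.mpr (by linarith)) hy
          have hqy : q y ≤ q b := hqanti b y hb0 hy
          simp only [hs'_def, hsy]
          nlinarith [mul_nonneg hc₀pos.le (sub_nonneg.mpr hAy)])
        z hz
      linarith
    -- step 2b : s must eventually exceed A
    set b₂ : ℝ := max b (2*C/c₀) with hb₂_def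
    clear_value b₂
    have hb₂b : b ≤ b₂ := by rw [hb₂_def]; exact le_max_left _ _
    have hb₂C : 2*C/c₀ ≤ b₂ := by rw [hb₂_def]; exact le_max_right _ _
    have hb₂0 : 0 < b₂ := by linarith
    have hb₂1 : 1 ≤ b₂ := by linarith
    have hex : ∃ z, b₂ ≤ z ∧ A z < s z := by
      by_contra hno
      push_neg at hno
      have hlow : ∀ z, b₂ ≤ z → c₀/2 * z^γ ≤ s' z := by
        intro z hz
        have hz0' : 0 < z := by linarith
        have hz1' : 1 ≤ z := by linarith
        have hsz₁ : c₀ < s z := h2a z (by linarith)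
        have hsz₂ : s z ≤ A z := hno z hz
        have hAzγ : z ^ γ ≤ A z := by
          simp only [hA_def]
          have : 0 < γ/2 * z⁻¹ := by positivity
          linarith
        have hzz : z ≤ z ^ γ := hzγ z hz1'
        have hqz : μ₀ + q z + 1 ≤ C := hqC z hz1'
        have hCz : 2*C ≤ z * c₀ := (div_le_iff₀ hc₀pos).mp (le_trans hb₂C hz)
        have hc₀A : c₀ ≤ A z := le_trans hc₀1 (le_trans hz1' (le_trans hzz hAzγ))
        simp only [hs'_def]
        nlinarith [mul_nonneg (sub_nonneg.mpr hsz₁.le) (sub_nonneg.mpr hsz₂),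
          mul_nonneg (hc₀pos.trans hsz₁).le (sub_nonneg.mpr hc₀A),
          mul_nonneg hc₀pos.le (sub_nonneg.mpr hAzγ),
          mul_nonneg hc₀pos.le (sub_nonneg.mpr hzz)]
      have hγ1ne : γ + 1 ≠ 0 := by positivity
      have hRd : ∀ z, b₂ ≤ z → HasDerivAt (fun y => s y - c₀/2 * (y^(γ+1)/(γ+1)))
          (s' z - c₀/2 * z^γ) z := by
        intro z hz
        have hz0' : 0 < z := by linarith
        have h3 : HasDerivAt (fun x : ℝ => x ^ (γ+1)) ((γ+1) * z^γ) z := by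
          have := Real.hasDerivAt_rpow_const (x := z) (p := γ+1) (Or.inl hz0'.ne')
          rwa [show γ + 1 - 1 = γ by ring] at this
        have h4 := (h3.div_const (γ+1)).const_mul (c₀/2)
        have h5 := (hsd z hz0').sub h4
        refine h5.congr_deriv ?_
        field_simp
      have hRmono := mono_Ici hRd (fun z hz => by linarith [hlow z hz])
      set T : ℝ := c₀/(2*(γ+1)) with hT_def
      clear_value T
      have hT : 0 < T := by rw [hT_def]; apply div_pos hc₀pos; linarith
      have hT1 : T ≤ 1 := by
        rw [hT_def, div_le_one (by linarith : (0:ℝ) < 2*(γ+1))]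
        linarith
      set z₁ : ℝ := max b₂ (2*(γ+1)/c₀ * (γ + 1 + b₂^(γ+1))) with hz₁_def
      clear_value z₁
      have hz₁b₂ : b₂ ≤ z₁ := by rw [hz₁_def]; exact le_max_left _ _
      have hz₁big : 2*(γ+1)/c₀ * (γ + 1 + b₂^(γ+1)) ≤ z₁ := by rw [hz₁_def]; exact le_max_right _ _
      have hz₁0 : 0 < z₁ := by linarith
      have hz₁1 : 1 ≤ z₁ := by linarith
      have hR := hRmono (self_mem_Ici) (mem_Ici.mpr hz₁b₂) hz₁b₂
      simp only at hR
      have hTx : ∀ x : ℝ, c₀/2 * (x/(γ+1)) = T * x := by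
        intro x; rw [hT_def]; field_simp; try ring
      rw [hTx, hTx] at hR
      have hb₂γpos : 0 < b₂ ^ (γ+1) := Real.rpow_pos_of_pos hb₂0 _
      have he3 : z₁ ^ (γ+1) = z₁ ^ γ * z₁ := by
        rw [Real.rpow_add hz₁0, Real.rpow_one]
      have hz₁γ1 : 1 ≤ z₁ ^ γ := by
        calc (1:ℝ) = z₁ ^ (0:ℝ) := (Real.rpow_zero z₁).symm
        _ ≤ z₁ ^ γ := Real.rpow_le_rpow_of_exponent_le hz₁1 (by linarith)
      have hsb₂ : c₀ < s b₂ := h2a b₂ hb₂b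
      have hnoz₁ : s z₁ ≤ A z₁ := hno z₁ hz₁b₂
      have hAz₁ : A z₁ ≤ z₁^γ + γ := by
        simp only [hA_def]
        have h1 : z₁⁻¹ ≤ 1 := inv_le_one_of_one_le₀ hz₁1
        have h2 := mul_le_mul_of_nonneg_left h1 (by linarith : (0:ℝ) ≤ γ/2)
        linarith
      have hTz₁ : γ + 1 + b₂^(γ+1) ≤ T * z₁ := by
        have h1 := mul_le_mul_of_nonneg_left hz₁big hT.le
        have h2 : T * (2*(γ+1)/c₀ * (γ + 1 + b₂^(γ+1))) = γ + 1 + b₂^(γ+1) := by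
          rw [hT_def]; field_simp; try ring
        linarith [h2 ▸ h1]
      have hz₁γ0 : (0:ℝ) ≤ z₁^γ := by positivity
      have hmul : γ*z₁^γ + z₁^γ + b₂^(γ+1)*z₁^γ ≤ T * z₁^(γ+1) := by
        have h := mul_le_mul_of_nonneg_right hTz₁ hz₁γ0
        have h2 : T * z₁^(γ+1) = T*z₁*z₁^γ := by rw [he3]; ring
        linarith [h, h2]
      have hp2 : T * b₂^(γ+1) ≤ b₂^(γ+1) := by
        nlinarith [mul_nonneg (sub_nonneg.mpr hT1) hb₂γpos.le]
      have hp3 : γ * 1 ≤ γ * z₁^γ := mul_le_mul_of_nonneg_left hz₁γ1 hγ0.le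
      have hp4 : b₂^(γ+1) * 1 ≤ b₂^(γ+1) * z₁^γ := mul_le_mul_of_nonneg_left hz₁γ1 hb₂γpos.le
      linarith [hR, hmul, hp2, hp3, hp4, hsb₂, hnoz₁, hAz₁, hc₀pos]
    obtain ⟨b₃, hb₃b₂, hsb₃⟩ := hex
    have hb₃Z : Z ≤ b₃ := by
      calc Z ≤ b := hb
      _ ≤ b₂ := hb₂b
      _ ≤ b₃ := hb₃b₂
    -- step 2c : s stays above A forever
    have h2c : ∀ z, b₃ ≤ z → A z < s z := by
      intro z hz
      have hsp := stay_pos (f := fun y => s y - A y) (f' := fun y => s' y - A' y) (a := b₃)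
        (fun y hy => (hsd y (by linarith [hz0 b₃ hb₃Z] : (0:ℝ) < y)).sub
          (hAd y (by linarith [hz0 b₃ hb₃Z])))
        (by linarith)
        (fun y hy hzero => by
          have hsy : s y = A y := by linarith
          have hy0 : (0:ℝ) < y := by linarith [hz0 b₃ hb₃Z]
          have hy1 : (1:ℝ) ≤ y := by linarith [hz1 b₃ hb₃Z]
          have hk := hkey y hy0
          have h2 := hz2γ y hy1
          simp only [hs'_def, hsy]
          have hZμ : μ₀ < Z := by simp only [hZ_def]; nlinarith
          nlinarith)
        z hz
      linarith
    -- log φ is nondecreasing on [b₃,∞), contradicting decay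
    have hlogmono : MonotoneOn (fun z => Real.log (φ z)) (Set.Ici b₃) := by
      apply mono_Ici (f' := fun z => deriv φ z / φ z)
      · intro z hz
        exact (hφd z).log (hpos z).ne'
      · intro z hz
        have h1 := h2c z hz
        have h2 : deriv φ z / φ z = s z - A z := by simp only [hs_def]; ring
        have h3 := hApos z (by linarith [hz0 b₃ hb₃Z])
        linarith
    have hev : ∀ᶠ z in atTop, φ z < φ b₃ := hdecay.eventually_lt_const (hpos b₃)
    obtain ⟨z₂, hz₂b, hz₂lt⟩ := ((eventually_ge_atTop b₃).and hev).exists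
    have hlog := hlogmono (self_mem_Ici) (mem_Ici.mpr hz₂b) hz₂b
    simp only at hlog
    have : φ b₃ ≤ φ z₂ := by
      have h := Real.exp_le_exp.mpr hlog
      rwa [Real.exp_log (hpos _), Real.exp_log (hpos _)] at h
    linarith
  -- final bound on s
  have hsC : ∀ z, Z ≤ z → s z ≤ C * z^(-γ) := by
    intro z hz
    have hz0' := hz0 z hz
    have hz1' := hz1 z hz
    have h1 := claim2 z hz
    have hAz := hApos z hz0'
    have hγz : 0 < z ^ γ := Real.rpow_pos_of_pos hz0' γ
    have hAzγ : z ^ γ ≤ A z := by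
      simp only [hA_def]
      have : 0 < γ/2 * z⁻¹ := by positivity
      linarith
    have h2 : (μ₀ + q z + 1)/A z ≤ C / z^γ :=
      div_le_div₀ hCpos.le (hqC z hz1') hγz hAzγ
    have h3 : C * z^(-γ) = C / z^γ := by
      rw [Real.rpow_neg hz0'.le, div_eq_mul_inv]
    linarith
  -- the limit of G = log φ + z^(γ+1)/(γ+1) + (γ/2) log z
  set G : ℝ → ℝ := fun z => Real.log (φ z) + z^(γ+1)/(γ+1) + γ/2 * Real.log z with hG_def
  clear_value G
  have hγ1ne : γ + 1 ≠ 0 := by positivity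
  have hGd : ∀ z, Z ≤ z → HasDerivAt G (s z) z := by
    intro z hz
    have hz0' := hz0 z hz
    have h1 : HasDerivAt (fun y => Real.log (φ y)) (deriv φ z / φ z) z :=
      (hφd z).log (hpos z).ne'
    have h3 : HasDerivAt (fun x : ℝ => x ^ (γ+1)) ((γ+1) * z^γ) z := by
      have := Real.hasDerivAt_rpow_const (x := z) (p := γ+1) (Or.inl hz0'.ne')
      rwa [show γ + 1 - 1 = γ by ring] at this
    have h2 := h3.div_const (γ+1)
    have h4 : HasDerivAt (fun y : ℝ => γ/2 * Real.log y) (γ/2 * z⁻¹) z :=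
      (Real.hasDerivAt_log hz0'.ne').const_mul (γ/2)
    have h5 := (h1.add h2).add h4
    rw [hG_def]
    refine h5.congr_deriv ?_
    simp only [hs_def, hA_def]
    field_simp
    ring
  have hGmono : MonotoneOn G (Set.Ici Z) := mono_Ici hGd (fun z hz => (claim1 z hz).le)
  have hHanti : AntitoneOn (fun z => G z + C/(γ-1) * z^(1-γ)) (Set.Ici Z) := by
    apply anti_Ici (f' := fun z => s z + C/(γ-1) * ((1-γ) * z^(-γ)))
    · intro z hz
      have hz0' := hz0 z hz
      have h3 : HasDerivAt (fun x : ℝ => x ^ (1-γ)) ((1-γ) * z^(-γ)) z := by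
        have := Real.hasDerivAt_rpow_const (x := z) (p := 1-γ) (Or.inl hz0'.ne')
        rwa [show 1 - γ - 1 = -γ by ring] at this
      exact (hGd z hz).add (h3.const_mul (C/(γ-1)))
    · intro z hz
      have h1 := hsC z hz
      have he : C/(γ-1) * ((1-γ) * z^(-γ)) = -(C * z^(-γ)) := by
        have hne : γ - 1 ≠ 0 := by linarith
        field_simp
        ring
      linarith [he]
  have hGbdd : ∀ z, Z ≤ z → G z ≤ G Z + C/(γ-1) * Z^(1-γ) := by
    intro z hz
    have h := hHanti (self_mem_Ici) (mem_Ici.mpr hz) hz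
    simp only at h
    have h2 : 0 ≤ C/(γ-1) * z^(1-γ) := by
      have ha := (Real.rpow_pos_of_pos (hz0 z hz) (1-γ)).le
      have hb : 0 ≤ C/(γ-1) := div_nonneg hCpos.le (by linarith)
      exact mul_nonneg hb ha
    linarith
  have hGmax_mono : Monotone (fun z => G (max z Z)) := by
    intro x y hxy
    exact hGmono (mem_Ici.mpr (le_max_right _ _)) (mem_Ici.mpr (le_max_right _ _))
      (max_le_max hxy le_rfl)
  have hGmax_bdd : BddAbove (Set.range (fun z => G (max z Z))) := by
    refine ⟨G Z + C/(γ-1) * Z^(1-γ), ?_⟩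
    rintro x ⟨y, rfl⟩
    exact hGbdd _ (le_max_right _ _)
  have hlim : Tendsto (fun z => G (max z Z)) atTop (nhds (⨆ z : ℝ, G (max z Z))) :=
    tendsto_atTop_ciSup hGmax_mono hGmax_bdd
  have hGlim : Tendsto G atTop (nhds (⨆ z : ℝ, G (max z Z))) := by
    apply hlim.congr'
    filter_upwards [eventually_ge_atTop Z] with z hz
    rw [max_eq_left hz]
  refine ⟨Real.exp (⨆ z : ℝ, G (max z Z)), Real.exp_pos _, ?_⟩
  have hexp : Tendsto (fun z => Real.exp (G z)) atTop (nhds (Real.exp (⨆ z : ℝ, G (max z Z)))) :=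
    (Real.continuous_exp.tendsto _).comp hGlim
  apply hexp.congr'
  filter_upwards [eventually_ge_atTop Z] with z hz
  have hz0' := hz0 z hz
  have hφz := hpos z
  simp only [hG_def]
  rw [Real.exp_add, Real.exp_add, Real.exp_log hφz]
  rw [show γ/2 * Real.log z = Real.log z * (γ/2) from mul_comm _ _,
    ← Real.rpow_def_of_pos hz0']
  rw [show -(γ/2) = -(γ/2) from rfl]
  rw [Real.rpow_neg hz0'.le (γ/2), Real.exp_neg]
  have h1 : (0:ℝ) < z ^ (γ/2) := Real.rpow_pos_of_pos hz0' _
  have h2 : (0:ℝ) < Real.exp (z^(γ+1)/(γ+1)) := Real.exp_pos _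
  field_simp
end

section
/- Let M = (−1,1) × 𝕋 and γ ≥ 0. For u in the domain of Δ_γ = ∂_x² + |x|^{2γ}∂_y² with Dirichlet boundary conditions at x = ±1, there is a constant C₁ > 0 (independent of u) such that ‖|D_y|^{2/(γ+1)} u‖_{L²(M)} ≤ C₁ ‖Δ_γ u‖_{L²(M)}, where |D_y|^{s} acts on the Fourier coefficients in y by multiplication by |n|^{s}. -/
open MeasureTheory Set intervalIntegral

set_option maxHeartbeats 1000000

private lemma amgm1 (t x y : ℝ) (ht : 0 < t) : x * y ≤ (1/(2*t)) * x^2 + (t/2) * y^2 := by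
  have h : (1/(2*t)) * x^2 + (t/2) * y^2 - x*y = (x - t*y)^2 / (2*t) := by field_simp; ring
  nlinarith [div_nonneg (sq_nonneg (x - t*y)) (by linarith : (0:ℝ) ≤ 2*t)]

private lemma amgm2 (s a b c d : ℝ) (hs : 0 < s) :
    |2*(a*c + b*d)| ≤ s*(a^2+b^2) + (1/s)*(c^2+d^2) := by
  have h1 : |2*(a*c + b*d)| ≤ 2*(|a| * |c|) + 2*(|b| * |d|) := by
    calc |2*(a*c + b*d)| = 2 * |a*c + b*d| := by rw [abs_mul]; norm_num
    _ ≤ 2 * (|a*c| + |b*d|) := by have := abs_add_le (a*c) (b*d); nlinarith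
    _ = 2*(|a| * |c|) + 2*(|b| * |d|) := by rw [abs_mul, abs_mul]; ring
  have h2 : ∀ p q : ℝ, 0 ≤ p → 0 ≤ q → 2*(p*q) ≤ s*p^2 + (1/s)*q^2 := by
    intro p q hp hq
    have h : s*p^2 + (1/s)*q^2 - 2*(p*q) = (s*p - q)^2 / s := by field_simp; ring
    nlinarith [div_nonneg (sq_nonneg (s*p - q)) hs.le]
  have h3 := h2 |a| |c| (abs_nonneg _) (abs_nonneg _)
  have h4 := h2 |b| |d| (abs_nonneg _) (abs_nonneg _)
  rw [sq_abs, sq_abs] at h3 h4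
  linarith [h1, h3, h4]

private lemma pt_norm (z : ℂ) : ‖z‖^2 = z.re^2 + z.im^2 := by
  rw [Complex.sq_norm, Complex.normSq_apply]
  ring

private lemma pt1 (z u : ℂ) (c : ℝ) :
    -((z.re * u.re + z.im * u.im) - c * (u.re^2 + u.im^2)) ≤ ‖z - (c:ℂ)*u‖ * ‖u‖ := by
  have h : ((z - (c:ℂ)*u) * (starRingEnd ℂ) u).re
      = (z.re * u.re + z.im * u.im) - c * (u.re^2 + u.im^2) := by
    simp [Complex.mul_re, Complex.sub_re, Complex.sub_im]
    ring
  calc -((z.re * u.re + z.im * u.im) - c * (u.re^2 + u.im^2))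
      = -(((z - (c:ℂ)*u) * (starRingEnd ℂ) u).re) := by rw [h]
    _ ≤ |((z - (c:ℂ)*u) * (starRingEnd ℂ) u).re| := neg_le_abs _
    _ ≤ ‖(z - (c:ℂ)*u) * (starRingEnd ℂ) u‖ := Complex.abs_re_le_norm _
    _ = ‖z - (c:ℂ)*u‖ * ‖u‖ := by
        rw [norm_mul]
        simp

private lemma ibp_real (a a1 a2 : ℝ → ℝ) (h1 : ∀ x, HasDerivAt a (a1 x) x)
    (h2 : ∀ x, HasDerivAt a1 (a2 x) x) (hc1 : Continuous a1) (hc2 : Continuous a2)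
    (hb1 : a (-1) = 0) (hb2 : a 1 = 0) :
    ∫ x in (-1:ℝ)..1, a2 x * a x = - ∫ x in (-1:ℝ)..1, (a1 x)^2 := by
  have hca : Continuous a := Differentiable.continuous (fun x => (h1 x).differentiableAt)
  have H := intervalIntegral.integral_deriv_mul_eq_sub (a := (-1:ℝ)) (b := (1:ℝ)) (u := a1) (v := a) (u' := a2) (v' := a1)
    (fun x _ => h2 x) (fun x _ => h1 x) (hc2.intervalIntegrable _ _) (hc1.intervalIntegrable _ _)
  rw [hb1, hb2, mul_zero, mul_zero, sub_zero] at H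
  have Hsplit : (∫ x in (-1:ℝ)..1, a2 x * a x) + ∫ x in (-1:ℝ)..1, a1 x * a1 x = 0 := by
    rw [← intervalIntegral.integral_add (f := fun x => a2 x * a x) (g := fun x => a1 x * a1 x) ((hc2.mul hca).intervalIntegrable _ _)
      ((hc1.mul hc1).intervalIntegrable _ _)]
    exact H
  have : (∫ x in (-1:ℝ)..1, a1 x * a1 x) = ∫ x in (-1:ℝ)..1, (a1 x)^2 := by
    congr 1; funext x; ring
  linarith [Hsplit, this.symm.le, this.le]

private lemma rpow_idA (γ N : ℝ) (hγ : 0 ≤ γ) (hN : 0 < N) :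
    N ^ ((4:ℝ) / (γ + 1)) = ((N ^ (-(1/(γ+1))))^4)⁻¹ := by
  have hγ1 : (0:ℝ) < γ + 1 := by linarith
  rw [← Real.rpow_natCast (N ^ (-(1/(γ+1)))) 4, ← Real.rpow_mul hN.le, ← Real.rpow_neg hN.le]
  congr 1
  push_cast
  field_simp

private lemma rpow_idB (γ N : ℝ) (hγ : 0 ≤ γ) (hN : 0 < N) :
    ((N ^ (-(1/(γ+1))) / 2) ^ (2*γ))⁻¹ * ((N^2) : ℝ)⁻¹
      = 4 ^ γ * (N ^ (-(1/(γ+1))))^2 := by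
  have hγ1 : (0:ℝ) < γ + 1 := by linarith
  have hρ : (0:ℝ) < N ^ (-(1/(γ+1))) := Real.rpow_pos_of_pos hN _
  have hr : (0:ℝ) < N ^ (-(1/(γ+1))) / 2 := by positivity
  have hl : (0:ℝ) < ((N ^ (-(1/(γ+1))) / 2) ^ (2*γ))⁻¹ * ((N^2) : ℝ)⁻¹ := by positivity
  have hrr : (0:ℝ) < 4 ^ γ * (N ^ (-(1/(γ+1))))^2 := by positivity
  rw [← Real.exp_log hl, ← Real.exp_log hrr]
  congr 1
  rw [Real.log_mul (by positivity) (by positivity), Real.log_mul (by positivity) (by positivity),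
      Real.log_inv, Real.log_inv, Real.log_rpow hr, Real.log_rpow (by norm_num : (0:ℝ) < 4),
      Real.log_div hρ.ne' (by norm_num), Real.log_rpow hN, Real.log_pow, Real.log_pow,
      Real.log_rpow hN, show Real.log 4 = 2 * Real.log 2 by
        rw [show (4:ℝ) = 2^2 by norm_num, Real.log_pow]; push_cast; ring]
  push_cast
  field_simp
  ring

private lemma mode_est (γ : ℝ) (hγ : 0 ≤ γ) (n : ℤ) (v : ℝ → ℂ) (hv : ContDiff ℝ 2 v)
    (hvb1 : v (-1) = 0) (hvb2 : v 1 = 0) :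
    |(n:ℝ)| ^ ((4:ℝ) / (γ + 1)) * ∫ x in (-1:ℝ)..1, ‖v x‖ ^ 2
      ≤ (6 + (4:ℝ) ^ (γ+1)) ^ 2 *
        ∫ x in (-1:ℝ)..1, ‖deriv (deriv v) x - (((n:ℝ)^2 * |x| ^ (2*γ) : ℝ) : ℂ) * v x‖ ^ 2 := by
  have hγ1 : (0:ℝ) < γ + 1 := by linarith
  -- continuity of all players
  have hvd : Differentiable ℝ v := hv.differentiable (by norm_num)
  have hv1 : ContDiff ℝ 1 (deriv v) := by
    rw [show (2 : WithTop ℕ∞) = 1 + 1 by norm_num] at hv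
    exact (contDiff_succ_iff_deriv.mp hv).2.2
  have hvd1 : Differentiable ℝ (deriv v) := hv1.differentiable one_ne_zero
  have hcv : Continuous v := hvd.continuous
  have hcv1 : Continuous (deriv v) := hvd1.continuous
  have hcv2 : Continuous (deriv (deriv v)) := hv1.continuous_deriv le_rfl
  have hwc : Continuous (fun x : ℝ => |x| ^ (2*γ)) := by
    rw [continuous_iff_continuousAt]; intro x
    exact (Real.continuousAt_rpow_const _ _ (Or.inr (by positivity))).comp
      continuous_abs.continuousAt
  have hw0 : ∀ x : ℝ, 0 ≤ |x| ^ (2*γ) := fun x => Real.rpow_nonneg (abs_nonneg x) _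
  -- component functions
  set a : ℝ → ℝ := fun x => (v x).re with hadef
  set b : ℝ → ℝ := fun x => (v x).im with hbdef
  set a1 : ℝ → ℝ := fun x => (deriv v x).re with ha1def
  set b1 : ℝ → ℝ := fun x => (deriv v x).im with hb1def
  set a2 : ℝ → ℝ := fun x => (deriv (deriv v) x).re with ha2def
  set b2 : ℝ → ℝ := fun x => (deriv (deriv v) x).im with hb2def
  have ha : ∀ x, HasDerivAt a (a1 x) x := fun x =>
    Complex.reCLM.hasFDerivAt.comp_hasDerivAt x (hvd x).hasDerivAt
  have hb : ∀ x, HasDerivAt b (b1 x) x := fun x =>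
    Complex.imCLM.hasFDerivAt.comp_hasDerivAt x (hvd x).hasDerivAt
  have ha1 : ∀ x, HasDerivAt a1 (a2 x) x := fun x =>
    Complex.reCLM.hasFDerivAt.comp_hasDerivAt x (hvd1 x).hasDerivAt
  have hb1 : ∀ x, HasDerivAt b1 (b2 x) x := fun x =>
    Complex.imCLM.hasFDerivAt.comp_hasDerivAt x (hvd1 x).hasDerivAt
  have hca : Continuous a := Complex.continuous_re.comp hcv
  have hcb : Continuous b := Complex.continuous_im.comp hcv
  have hca1 : Continuous a1 := Complex.continuous_re.comp hcv1
  have hcb1 : Continuous b1 := Complex.continuous_im.comp hcv1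
  have hca2 : Continuous a2 := Complex.continuous_re.comp hcv2
  have hcb2 : Continuous b2 := Complex.continuous_im.comp hcv2
  -- g and h
  set g : ℝ → ℝ := fun x => a x^2 + b x^2 with hgdef
  set h : ℝ → ℝ := fun x => a1 x^2 + b1 x^2 with hhdef
  have hgc : Continuous g := (hca.pow 2).add (hcb.pow 2)
  have hhc : Continuous h := (hca1.pow 2).add (hcb1.pow 2)
  have hg0 : ∀ x, 0 ≤ g x := fun x => by positivity
  have hh0 : ∀ x, 0 ≤ h x := fun x => by positivity
  -- the source term
  set fC : ℝ → ℂ := fun x => deriv (deriv v) x - (((n:ℝ)^2 * |x| ^ (2*γ) : ℝ) : ℂ) * v x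
    with hfCdef
  have hcfC : Continuous fC := hcv2.sub ((Complex.continuous_ofReal.comp
    (continuous_const.mul hwc)).mul hcv)
  have hcF2 : Continuous (fun x => ‖fC x‖^2) := (hcfC.norm.pow 2)
  -- named integrals
  set U : ℝ := ∫ x in (-1:ℝ)..1, g x with hUdef
  set F : ℝ := ∫ x in (-1:ℝ)..1, ‖fC x‖^2 with hFdef
  set Q1 : ℝ := ∫ x in (-1:ℝ)..1, h x with hQ1def
  set W : ℝ := ∫ x in (-1:ℝ)..1, |x| ^ (2*γ) * g x with hWdef
  have hwg : Continuous (fun x : ℝ => |x| ^ (2*γ) * g x) := hwc.mul hgc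
  have hU0 : 0 ≤ U := intervalIntegral.integral_nonneg (by norm_num) (fun x _ => hg0 x)
  have hF0 : 0 ≤ F := intervalIntegral.integral_nonneg (by norm_num) (fun x _ => by positivity)
  have hQ10 : 0 ≤ Q1 := intervalIntegral.integral_nonneg (by norm_num) (fun x _ => hh0 x)
  have hW0 : 0 ≤ W := intervalIntegral.integral_nonneg (by norm_num)
    (fun x _ => mul_nonneg (hw0 x) (hg0 x))
  -- rewrite the goal
  have hUgoal : (∫ x in (-1:ℝ)..1, ‖v x‖ ^ 2) = U :=
    intervalIntegral.integral_congr (fun x _ => pt_norm (v x))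
  rw [hUgoal]
  rcases eq_or_ne n 0 with h0 | hn
  · subst h0
    simp only [Int.cast_zero, abs_zero]
    rw [Real.zero_rpow (by positivity : ((4:ℝ) / (γ + 1)) ≠ 0), zero_mul]
    exact mul_nonneg (by positivity) hF0
  -- main case
  set N : ℝ := |(n:ℝ)| with hNdef
  have hN1 : (1:ℝ) ≤ N := by
    have h1 : (1:ℤ) ≤ |n| := Int.one_le_abs hn
    have : ((1:ℤ):ℝ) ≤ ((|n|:ℤ):ℝ) := by exact_mod_cast h1
    simpa [hNdef] using this
  have hN0 : (0:ℝ) < N := lt_of_lt_of_le one_pos hN1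
  set ρ : ℝ := N ^ (-(1/(γ+1))) with hρdef
  have hρ0 : 0 < ρ := Real.rpow_pos_of_pos hN0 _
  have hρ1 : ρ ≤ 1 := Real.rpow_le_one_of_one_le_of_nonpos hN1
    (by rw [neg_nonpos]; positivity)
  set r : ℝ := ρ / 2 with hrdef
  have hr0 : 0 < r := by positivity
  have h2r : 2*r ≤ 1 := by rw [hrdef]; linarith
  have hr1 : r ≤ 1 := by linarith
  -- coefficient identity
  have hcoef : ∀ x : ℝ, ((n:ℝ)^2 * |x| ^ (2*γ)) = N^2 * |x| ^ (2*γ) := fun x => by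
    rw [hNdef, sq_abs]
  -- Step A : integration by parts
  set Q2 : ℝ := N^2 * W with hQ2def
  have hQ20 : 0 ≤ Q2 := mul_nonneg (by positivity) hW0
  set t : ℝ := 1 / ((6 + (4:ℝ) ^ (γ+1)) * ρ^2) with htdef
  have hK0 : (0:ℝ) < 6 + (4:ℝ) ^ (γ+1) := by positivity
  have ht0 : 0 < t := by rw [htdef]; positivity
  have hQF : Q1 + Q2 ≤ (1/(2*t)) * F + (t/2) * U := by
    have hibpa := ibp_real a a1 a2 ha ha1 hca1 hca2
      (by simp [hadef, hvb1]) (by simp [hadef, hvb2])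
    have hibpb := ibp_real b b1 b2 hb hb1 hcb1 hcb2
      (by simp [hbdef, hvb1]) (by simp [hbdef, hvb2])
    have hptineq : ∀ x ∈ Icc (-1:ℝ) 1,
        -((a2 x * a x + b2 x * b x) - N^2 * |x| ^ (2*γ) * g x)
          ≤ (1/(2*t)) * ‖fC x‖^2 + (t/2) * g x := by
      intro x _
      have h1 := pt1 (deriv (deriv v) x) (v x) (N^2 * |x| ^ (2*γ))
      have h2 := amgm1 t ‖fC x‖ ‖v x‖ ht0
      have h3 : ‖v x‖^2 = g x := pt_norm (v x)
      have h4 : (deriv (deriv v) x - ((N^2 * |x| ^ (2*γ) : ℝ):ℂ) * v x) = fC x := by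
        rw [hfCdef]; simp only []
        rw [← hcoef x]
      rw [h4] at h1
      calc -((a2 x * a x + b2 x * b x) - N^2 * |x| ^ (2*γ) * g x)
          ≤ ‖fC x‖ * ‖v x‖ := by
            have := h1
            simp only [hgdef, hadef, hbdef, ha2def, hb2def] at this ⊢
            convert this using 2 <;> ring
        _ ≤ (1/(2*t)) * ‖fC x‖^2 + (t/2) * ‖v x‖^2 := h2
        _ = (1/(2*t)) * ‖fC x‖^2 + (t/2) * g x := by rw [h3]
    have hIeq : Q1 + Q2 = ∫ x in (-1:ℝ)..1,
        (-((a2 x * a x + b2 x * b x) - N^2 * |x| ^ (2*γ) * g x)) := by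
      have e1 : (fun x => -((a2 x * a x + b2 x * b x) - N^2 * |x| ^ (2*γ) * g x))
          = fun x => (-(a2 x * a x)) + ((-(b2 x * b x)) + N^2 * (|x| ^ (2*γ) * g x)) := by
        funext x; ring
      rw [e1, intervalIntegral.integral_add, intervalIntegral.integral_add,
          intervalIntegral.integral_neg, intervalIntegral.integral_neg,
          intervalIntegral.integral_const_mul, hibpa, hibpb]
      · rw [hQ1def, hQ2def, hWdef]
        have : (∫ x in (-1:ℝ)..1, h x)
            = (∫ x in (-1:ℝ)..1, (a1 x)^2) + ∫ x in (-1:ℝ)..1, (b1 x)^2 := by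
          rw [← intervalIntegral.integral_add (f := fun x => a1 x ^ 2) (g := fun x => b1 x ^ 2) ((hca1.pow 2).intervalIntegrable _ _)
            ((hcb1.pow 2).intervalIntegrable _ _)]
        rw [this]; ring
      · exact ((hcb2.mul hcb).intervalIntegrable _ _).neg
      · exact (continuous_const.mul hwg).intervalIntegrable _ _
      · exact ((hca2.mul hca).intervalIntegrable _ _).neg
      · exact (((hcb2.mul hcb).intervalIntegrable _ _).neg).add
          ((continuous_const.mul hwg).intervalIntegrable _ _)
    rw [hIeq]
    calc ∫ x in (-1:ℝ)..1, (-((a2 x * a x + b2 x * b x) - N^2 * |x| ^ (2*γ) * g x))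
        ≤ ∫ x in (-1:ℝ)..1, ((1/(2*t)) * ‖fC x‖^2 + (t/2) * g x) := by
          apply intervalIntegral.integral_mono_on (by norm_num)
          · exact (((((hca2.mul hca).add (hcb2.mul hcb)).sub
              ((continuous_const.mul hwc).mul hgc)).neg)).intervalIntegrable _ _
          · exact ((continuous_const.mul hcF2).add (continuous_const.mul hgc)).intervalIntegrable _ _
          · exact hptineq
      _ = (1/(2*t)) * F + (t/2) * U := by
          rw [intervalIntegral.integral_add (f := fun x => (1/(2*t)) * ‖fC x‖^2) (g := fun x => (t/2) * g x) ((continuous_const.mul hcF2).intervalIntegrable _ _)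
            ((continuous_const.mul hgc).intervalIntegrable _ _),
            intervalIntegral.integral_const_mul, intervalIntegral.integral_const_mul]
  -- Step B : localization
  obtain ⟨x₀, hx₀mem, hx₀min⟩ := (isCompact_Icc (a := r) (b := 2*r)).exists_isMinOn
    ⟨r, by constructor <;> linarith only [hr0]⟩ hgc.continuousOn
  have hx₀1 : r ≤ x₀ := hx₀mem.1
  have hx₀2 : x₀ ≤ 2*r := hx₀mem.2
  set I2 : ℝ := ∫ x in r..(2*r), g x with hI2def
  have hgx₀ : r * g x₀ ≤ I2 := by
    have h1 : ∫ x in r..(2*r), (fun _ => g x₀) x ≤ ∫ x in r..(2*r), g x :=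
      intervalIntegral.integral_mono_on (by linarith only [hr0]) intervalIntegrable_const
        (hgc.intervalIntegrable _ _) (fun y hy => hx₀min hy)
    rw [intervalIntegral.integral_const, smul_eq_mul] at h1
    have e : 2*r - r = r := by ring
    rw [e] at h1
    exact h1
  set gd : ℝ → ℝ := fun x => 2*(a x * a1 x + b x * b1 x) with hgddef
  have hgdc : Continuous gd := continuous_const.mul ((hca.mul hca1).add (hcb.mul hcb1))
  have hgd : ∀ x, HasDerivAt g (gd x) x := by
    intro x
    have h1 : HasDerivAt (fun x => a x ^ 2 + b x ^ 2) _ x := ((ha x).pow 2).add ((hb x).pow 2)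
    convert h1 using 1
    simp [hgddef]
    ring
  set Dint : ℝ := ∫ x in (-r)..(2*r), |gd x| with hDdef
  have hg_pt : ∀ x ∈ Icc (-r) r, g x ≤ g x₀ + Dint := by
    intro x hx
    have hxle : x ≤ x₀ := le_trans hx.2 hx₀1
    have hftc : ∫ s in x..x₀, gd s = g x₀ - g x :=
      intervalIntegral.integral_eq_sub_of_hasDerivAt (fun s _ => hgd s)
        (hgdc.intervalIntegrable _ _)
    have habs : |∫ s in x..x₀, gd s| ≤ ∫ s in x..x₀, |gd s| :=
      intervalIntegral.abs_integral_le_integral_abs hxle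
    have hsub : ∫ s in x..x₀, |gd s| ≤ Dint :=
      intervalIntegral.integral_mono_interval (by linarith only [hx.1, hr0]) hxle (by linarith only [hx₀2])
        (Filter.Eventually.of_forall fun s => abs_nonneg _) (hgdc.abs.intervalIntegrable _ _)
    have hna := neg_abs_le (∫ s in x..x₀, gd s)
    linarith only [hftc, habs, hsub, hna]
  set s0 : ℝ := 1/(8*r) with hs0def
  have hs00 : 0 < s0 := by rw [hs0def]; positivity
  have hDint : Dint ≤ s0 * (∫ x in (-r)..(2*r), g x) + (1/s0) * ∫ x in (-r)..(2*r), h x := by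
    calc Dint ≤ ∫ x in (-r)..(2*r), (s0 * g x + (1/s0) * h x) := by
          apply intervalIntegral.integral_mono_on (by linarith only [hr0])
            (hgdc.abs.intervalIntegrable _ _)
            (((continuous_const.mul hgc).add (continuous_const.mul hhc)).intervalIntegrable _ _)
          intro x _
          have h1 := amgm2 s0 (a x) (b x) (a1 x) (b1 x) hs00
          exact h1
      _ = _ := by
          rw [intervalIntegral.integral_add (f := fun x => s0 * g x) (g := fun x => (1/s0) * h x) ((continuous_const.mul hgc).intervalIntegrable _ _)
            ((continuous_const.mul hhc).intervalIntegrable _ _),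
            intervalIntegral.integral_const_mul, intervalIntegral.integral_const_mul]
  set I1 : ℝ := ∫ x in (-r)..r, g x with hI1def
  have hPsplit : ∫ x in (-r)..(2*r), g x = I1 + I2 :=
    (intervalIntegral.integral_add_adjacent_intervals (hgc.intervalIntegrable _ _)
      (hgc.intervalIntegrable _ _)).symm
  have hJQ1 : ∫ x in (-r)..(2*r), h x ≤ Q1 :=
    intervalIntegral.integral_mono_interval (by linarith only [hr0, h2r]) (by linarith only [hr0]) h2r
      (Filter.Eventually.of_forall fun s => hh0 s) (hhc.intervalIntegrable _ _)
  have hI20 : 0 ≤ I2 := intervalIntegral.integral_nonneg (by linarith only [hr0]) (fun x _ => hg0 x)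
  have hI1bound : I1 ≤ 3*I2 + 22*r^2*Q1 := by
    have h1 : I1 ≤ 2*r*(g x₀ + Dint) := by
      calc I1 ≤ ∫ x in (-r)..r, (fun _ => g x₀ + Dint) x :=
            intervalIntegral.integral_mono_on (by linarith only [hr0]) (hgc.intervalIntegrable _ _)
              intervalIntegrable_const hg_pt
        _ = 2*r*(g x₀ + Dint) := by rw [intervalIntegral.integral_const, smul_eq_mul]; ring
    have h2 : 2*r*s0 = 1/4 := by rw [hs0def]; field_simp; ring
    have h3 : 2*r*(1/s0) = 16*r^2 := by rw [hs0def]; field_simp; ring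
    have hd2 : 2*r*Dint ≤ (1/4)*(I1+I2) + 16*r^2*Q1 := by
      have h4 := mul_le_mul_of_nonneg_left hDint (by linarith only [hr0] : (0:ℝ) ≤ 2*r)
      rw [hPsplit] at h4
      have h5 : 2*r*(s0*(I1+I2) + (1/s0) * ∫ x in (-r)..(2*r), h x)
          = (2*r*s0)*(I1+I2) + (2*r*(1/s0)) * ∫ x in (-r)..(2*r), h x := by ring
      rw [h5, h2, h3] at h4
      have h6 := mul_le_mul_of_nonneg_left hJQ1 (by positivity : (0:ℝ) ≤ 16*r^2)
      linarith only [h4, h6]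
    have h7 : 2*r*g x₀ ≤ 2*I2 := by linarith only [hgx₀]
    have h8 : 0 ≤ r^2*Q1 := by positivity
    nlinarith only [h1, hd2, h7, h8, hI20]
  -- far region
  set E1 : ℝ := ∫ x in (-1:ℝ)..(-r), g x with hE1def
  set E2 : ℝ := ∫ x in r..(1:ℝ), g x with hE2def
  have hE10 : 0 ≤ E1 := intervalIntegral.integral_nonneg (by linarith only [hr0, h2r]) (fun x _ => hg0 x)
  have hE20 : 0 ≤ E2 := intervalIntegral.integral_nonneg (by linarith only [hr0, h2r]) (fun x _ => hg0 x)
  have hUsplit : U = E1 + I1 + E2 := by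
    have hs1 : E1 + (∫ x in (-r)..(1:ℝ), g x) = U :=
      intervalIntegral.integral_add_adjacent_intervals (hgc.intervalIntegrable _ _)
        (hgc.intervalIntegrable _ _)
    have hs2 : I1 + E2 = ∫ x in (-r)..(1:ℝ), g x :=
      intervalIntegral.integral_add_adjacent_intervals (hgc.intervalIntegrable _ _)
        (hgc.intervalIntegrable _ _)
    rw [← hs2] at hs1
    linarith only [hs1]
  have hwpt : ∀ x : ℝ, r ≤ |x| → g x ≤ (r ^ (2*γ))⁻¹ * (|x| ^ (2*γ) * g x) := by
    intro x hx
    have h1 : r ^ (2*γ) ≤ |x| ^ (2*γ) := Real.rpow_le_rpow hr0.le hx (by positivity)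
    have h2 : (0:ℝ) < r ^ (2*γ) := Real.rpow_pos_of_pos hr0 _
    calc g x = (r ^ (2*γ))⁻¹ * (r ^ (2*γ) * g x) := by field_simp
      _ ≤ (r ^ (2*γ))⁻¹ * (|x| ^ (2*γ) * g x) :=
          mul_le_mul_of_nonneg_left (mul_le_mul_of_nonneg_right h1 (hg0 x)) (by positivity)
  have hE1b : E1 ≤ (r ^ (2*γ))⁻¹ * ∫ x in (-1:ℝ)..(-r), |x| ^ (2*γ) * g x := by
    rw [← intervalIntegral.integral_const_mul]
    apply intervalIntegral.integral_mono_on (by linarith only [hr0, h2r]) (hgc.intervalIntegrable _ _)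
      ((continuous_const.mul hwg).intervalIntegrable _ _)
    intro x hx
    exact hwpt x (le_trans (by linarith only [hx.2] : r ≤ -x) (neg_le_abs x))
  have hE2b : E2 ≤ (r ^ (2*γ))⁻¹ * ∫ x in r..(1:ℝ), |x| ^ (2*γ) * g x := by
    rw [← intervalIntegral.integral_const_mul]
    apply intervalIntegral.integral_mono_on (by linarith only [hr0, h2r]) (hgc.intervalIntegrable _ _)
      ((continuous_const.mul hwg).intervalIntegrable _ _)
    intro x hx
    exact hwpt x (le_trans hx.1 (le_abs_self x))
  have hWsplit : (∫ x in (-1:ℝ)..(-r), |x| ^ (2*γ) * g x)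
      + (∫ x in (-r)..r, |x| ^ (2*γ) * g x) + (∫ x in r..(1:ℝ), |x| ^ (2*γ) * g x) = W := by
    have hs1 : (∫ x in (-1:ℝ)..(-r), |x| ^ (2*γ) * g x) + (∫ x in (-r)..(1:ℝ), |x| ^ (2*γ) * g x)
        = W := intervalIntegral.integral_add_adjacent_intervals (hwg.intervalIntegrable _ _)
          (hwg.intervalIntegrable _ _)
    have hs2 : (∫ x in (-r:ℝ)..r, |x| ^ (2*γ) * g x) + (∫ x in r..(1:ℝ), |x| ^ (2*γ) * g x)
        = ∫ x in (-r)..(1:ℝ), |x| ^ (2*γ) * g x :=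
      intervalIntegral.integral_add_adjacent_intervals (hwg.intervalIntegrable _ _)
        (hwg.intervalIntegrable _ _)
    rw [← hs2] at hs1
    linarith only [hs1]
  have hWmid0 : 0 ≤ ∫ x in (-r)..r, |x| ^ (2*γ) * g x :=
    intervalIntegral.integral_nonneg (by linarith only [hr0]) (fun x _ => mul_nonneg (hw0 x) (hg0 x))
  have hfar : E1 + E2 ≤ (r ^ (2*γ))⁻¹ * W := by
    have hrw : (0:ℝ) ≤ (r ^ (2*γ))⁻¹ := by positivity
    have h1 : (∫ x in (-1:ℝ)..(-r), |x| ^ (2*γ) * g x) + (∫ x in r..(1:ℝ), |x| ^ (2*γ) * g x)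
        ≤ W := by linarith only [hWsplit, hWmid0]
    calc E1 + E2 ≤ (r ^ (2*γ))⁻¹ * ((∫ x in (-1:ℝ)..(-r), |x| ^ (2*γ) * g x)
          + (∫ x in r..(1:ℝ), |x| ^ (2*γ) * g x)) := by
          rw [mul_add]; exact add_le_add hE1b hE2b
      _ ≤ (r ^ (2*γ))⁻¹ * W := mul_le_mul_of_nonneg_left h1 hrw
  have hI2E2 : I2 ≤ E2 :=
    intervalIntegral.integral_mono_interval le_rfl (by linarith only [hr0]) h2r
      (Filter.Eventually.of_forall fun s => hg0 s) (hgc.intervalIntegrable _ _)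
  -- combine spatial bounds
  have hB := rpow_idB γ N hγ hN0
  rw [← hρdef, ← hrdef] at hB
  have hQ2W : (r ^ (2*γ))⁻¹ * W = (4 ^ γ * ρ^2) * Q2 := by
    have hNe : (N:ℝ) ≠ 0 := hN0.ne'
    have h1 : (r ^ (2*γ))⁻¹ * W = ((r ^ (2*γ))⁻¹ * ((N^2):ℝ)⁻¹) * (N^2 * W) := by
      field_simp
    rw [h1, hB, hQ2def]
  have hUbound : U ≤ (6 + (4:ℝ)^(γ+1)) * ρ^2 * (Q1 + Q2) := by
    have h1 : U ≤ 4*(E1+E2) + 22*r^2*Q1 := by linarith only [hUsplit, hI1bound, hI2E2, hE10, hE20]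
    have h2 : U ≤ 4*((4 ^ γ * ρ^2) * Q2) + 22*r^2*Q1 := by
      have h3 := mul_le_mul_of_nonneg_left hfar (by norm_num : (0:ℝ) ≤ 4)
      rw [hQ2W] at h3
      linarith only [h1, h3]
    have h5 : r^2 = ρ^2/4 := by rw [hrdef]; ring
    have h6 : (4:ℝ)^(γ+1) = 4^γ*4 := Real.rpow_add_one (by norm_num) γ
    rw [h5] at h2
    have h7 : (0:ℝ) ≤ 4^γ := Real.rpow_nonneg (by norm_num) γ
    nlinarith only [h2, h6, h7, mul_nonneg (sq_nonneg ρ) hQ10, mul_nonneg (sq_nonneg ρ) hQ20,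
      mul_nonneg (mul_nonneg h7 (sq_nonneg ρ)) hQ10,
      mul_nonneg (mul_nonneg h7 (sq_nonneg ρ)) hQ20]
  -- final combination
  have hfinal : U ≤ (6 + (4:ℝ)^(γ+1))^2*ρ^4*F := by
    have h1 : U ≤ (6 + (4:ℝ)^(γ+1))*ρ^2*((1/(2*t))*F + (t/2)*U) :=
      le_trans hUbound (mul_le_mul_of_nonneg_left hQF (by positivity))
    have h2 : (6 + (4:ℝ)^(γ+1))*ρ^2*((1/(2*t))*F + (t/2)*U)
        = ((6 + (4:ℝ)^(γ+1))^2*ρ^4/2)*F + (1/2)*U := by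
      rw [htdef]
      field_simp
    rw [h2] at h1
    linarith only [h1]
  have hA := rpow_idA γ N hγ hN0
  rw [← hρdef] at hA
  rw [hA, inv_mul_le_iff₀ (by positivity : (0:ℝ) < ρ^4)]
  nlinarith only [hfinal, sq_nonneg ρ]

/-- Fourier-side formulation of the subelliptic coercivity estimate
`‖|D_y|^(2/(γ+1)) u‖_{L²(M)} ≤ C₁ ‖Δ_γ u‖_{L²(M)}` on `M = (-1,1) × 𝕋`:
writing `u(x,y) = Σ_n (u n)(x) e^{iny}`, the `n`-th Fourier mode of `Δ_γ u` is
`(u n)'' - n²|x|^{2γ} u n`, and the `L²(M)` norms are computed by Plancherel. -/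
theorem grushin_coercivity_Dy (γ : ℝ) (hγ : 0 ≤ γ) :
    ∃ C₁ : ℝ, 0 < C₁ ∧
      ∀ u : ℤ → ℝ → ℂ,
        (∀ n, ContDiff ℝ 2 (u n)) →
        (∀ n, u n (-1) = 0 ∧ u n 1 = 0) →
        (∀ n, IntegrableOn (fun x : ℝ => ‖u n x‖ ^ 2) (Set.Ioo (-1 : ℝ) 1)) →
        (∀ n, IntegrableOn
          (fun x : ℝ =>
            ‖deriv (deriv (u n)) x - (((n : ℝ) ^ 2 * |x| ^ (2 * γ) : ℝ) : ℂ) * u n x‖ ^ 2)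
          (Set.Ioo (-1 : ℝ) 1)) →
        Summable (fun n : ℤ =>
          ∫ x in Set.Ioo (-1 : ℝ) 1, ‖u n x‖ ^ 2) →
        Summable (fun n : ℤ =>
          ∫ x in Set.Ioo (-1 : ℝ) 1,
            ‖deriv (deriv (u n)) x - (((n : ℝ) ^ 2 * |x| ^ (2 * γ) : ℝ) : ℂ) * u n x‖ ^ 2) →
        (∑' n : ℤ, |(n : ℝ)| ^ (4 / (γ + 1)) * ∫ x in Set.Ioo (-1 : ℝ) 1, ‖u n x‖ ^ 2)
          ≤ C₁ ^ 2 * ∑' n : ℤ, ∫ x in Set.Ioo (-1 : ℝ) 1,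
              ‖deriv (deriv (u n)) x - (((n : ℝ) ^ 2 * |x| ^ (2 * γ) : ℝ) : ℂ) * u n x‖ ^ 2 := by
  refine ⟨6 + (4:ℝ) ^ (γ+1), by positivity, ?_⟩
  intro u hu hb hi1 hi2 hs1 hs2
  have key : ∀ n : ℤ,
      |(n:ℝ)| ^ (4 / (γ+1)) * (∫ x in Set.Ioo (-1:ℝ) 1, ‖u n x‖ ^ 2)
        ≤ (6 + (4:ℝ)^(γ+1))^2 * ∫ x in Set.Ioo (-1:ℝ) 1,
            ‖deriv (deriv (u n)) x - (((n:ℝ)^2 * |x| ^ (2*γ) : ℝ) : ℂ) * u n x‖ ^ 2 := by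
    intro n
    have hIoo : ∀ f : ℝ → ℝ, (∫ x in Set.Ioo (-1:ℝ) 1, f x) = ∫ x in (-1:ℝ)..1, f x := by
      intro f
      rw [intervalIntegral.integral_of_le (by norm_num),
        MeasureTheory.integral_Ioc_eq_integral_Ioo]
    rw [hIoo, hIoo]
    exact mode_est γ hγ n (u n) (hu n) (hb n).1 (hb n).2
  have hnonneg : ∀ n : ℤ,
      0 ≤ |(n:ℝ)| ^ (4/(γ+1)) * ∫ x in Set.Ioo (-1:ℝ) 1, ‖u n x‖^2 := by
    intro n
    refine mul_nonneg (Real.rpow_nonneg (abs_nonneg _) _) ?_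
    exact MeasureTheory.setIntegral_nonneg measurableSet_Ioo (fun x _ => by positivity)
  have hsum2 : Summable (fun n : ℤ => (6 + (4:ℝ)^(γ+1))^2 * ∫ x in Set.Ioo (-1:ℝ) 1,
      ‖deriv (deriv (u n)) x - (((n:ℝ)^2 * |x| ^ (2*γ) : ℝ) : ℂ) * u n x‖ ^ 2) :=
    hs2.mul_left _
  have hsumL : Summable (fun n : ℤ =>
      |(n:ℝ)| ^ (4/(γ+1)) * ∫ x in Set.Ioo (-1:ℝ) 1, ‖u n x‖^2) :=
    Summable.of_nonneg_of_le hnonneg key hsum2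
  calc (∑' n : ℤ, |(n:ℝ)| ^ (4/(γ+1)) * ∫ x in Set.Ioo (-1:ℝ) 1, ‖u n x‖^2)
      ≤ ∑' n : ℤ, (6 + (4:ℝ)^(γ+1))^2 * ∫ x in Set.Ioo (-1:ℝ) 1,
          ‖deriv (deriv (u n)) x - (((n:ℝ)^2 * |x| ^ (2*γ) : ℝ) : ℂ) * u n x‖ ^ 2 :=
        Summable.tsum_le_tsum key hsumL hsum2
    _ = (6 + (4:ℝ)^(γ+1))^2 * ∑' n : ℤ, ∫ x in Set.Ioo (-1:ℝ) 1,
          ‖deriv (deriv (u n)) x - (((n:ℝ)^2 * |x| ^ (2*γ) : ℝ) : ℂ) * u n x‖ ^ 2 :=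
        tsum_mul_left
end
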